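/- (Co-area-type inequality) Let G' = (V',E') be a finite simple graph, U ⊆ V', and g : V' → ℝ nonnegative with g_i > 0 exactly on U, U nonempty. Define h_g(U) = min over 0 ≤ t < max_i g_i of cut(C_t)/|C_t| where C_t = {i ∈ U : g_i > t}. Then for p ≥ 1, h_g(U)·Σ_i g_i^p ≤ Σ_{{i,j}∈E'} |g_i^p − g_j^p|. -/

import Mathlib

open Finset

variable {V : Type*}

/-- Signless p-Laplacian form: `Q_p(x) = Σ_{{i,j}∈E} |x_i + x_j|^p`. -/
noncomputable def Qp [Fintype V] (G : SimpleGraph V) [Fintype G.edgeSet] (p : ℝ)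
    (x : V → ℝ) : ℝ :=
  ∑ e ∈ G.edgeFinset,
    Sym2.lift ⟨fun i j => |x i + x j| ^ p, fun i j => by simp [add_comm]⟩ e

/-- The p-norm unit sphere condition. -/
def unitSphere [Fintype V] (p : ℝ) (x : V → ℝ) : Prop := ∑ i, |x i| ^ p = 1

/-- Smallest signless p-Laplacian eigenvalue. -/
noncomputable def qp [Fintype V] (G : SimpleGraph V) [Fintype G.edgeSet] (p : ℝ) : ℝ :=
  sInf {r | ∃ x : V → ℝ, unitSphere p x ∧ Qp G p x = r}

/-- Largest signless p-Laplacian eigenvalue. -/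
noncomputable def lamp [Fintype V] (G : SimpleGraph V) [Fintype G.edgeSet] (p : ℝ) : ℝ :=
  sSup {r | ∃ x : V → ℝ, unitSphere p x ∧ Qp G p x = r}

open Classical in
/-- Number of edges with both endpoints in `S`. -/
noncomputable def eIn [Fintype V] (G : SimpleGraph V) [Fintype G.edgeSet] (S : Finset V) : ℕ :=
  (G.edgeFinset.filter fun e => ∀ v ∈ e, v ∈ S).card

open Classical in
/-- Number of edges with exactly one endpoint in `U`. -/
noncomputable def cutN [Fintype V] (G : SimpleGraph V) [Fintype G.edgeSet] (U : Finset V) : ℕ :=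
  (G.edgeFinset.filter fun e => (∃ v ∈ e, v ∈ U) ∧ (∃ w ∈ e, w ∉ U)).card

/-- Desai–Rao bipartiteness parameter ψ(G). -/
noncomputable def psi [Fintype V] [DecidableEq V] (G : SimpleGraph V) [Fintype G.edgeSet] : ℝ :=
  sInf {r | ∃ S T : Finset V, Disjoint S T ∧ (S ∪ T).Nonempty ∧
    r = (2 * eIn G S + 2 * eIn G T + cutN G (S ∪ T)) / (S ∪ T).card}

open Classical in
/-- `h_g(U)`: min over thresholds `0 ≤ t < max g` of `cut(C_t)/|C_t|` where `C_t = {i : g i > t}`. -/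
noncomputable def hgC [Fintype V] [DecidableEq V] (G : SimpleGraph V) [Fintype G.edgeSet]
    (g : V → ℝ) : ℝ :=
  sInf {r | ∃ t : ℝ, 0 ≤ t ∧ t < sSup (Set.range g) ∧
    r = (cutN G (univ.filter fun i => t < g i) : ℝ) / (univ.filter fun i => t < g i).card}

/-- Eigenpair of the signless p-Laplacian. -/
def IsEigenpair [Fintype V] (G : SimpleGraph V) [DecidableRel G.Adj] (p : ℝ)
    (x : V → ℝ) (μ : ℝ) : Prop :=
  ∀ k, ∑ j ∈ G.neighborFinset k, Real.sign (x k + x j) * |x k + x j| ^ (p - 1)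
      = μ * (Real.sign (x k) * |x k| ^ (p - 1))

/-- Vertex bipartiteness: minimum number of vertices to delete to make `G` bipartite. -/
noncomputable def nuG [Fintype V] [DecidableEq V] (G : SimpleGraph V) : ℕ :=
  sInf {k | ∃ S : Finset V, S.card = k ∧ ((SimpleGraph.induce ((↑S : Set V)ᶜ) G).Colorable 2)}

open MeasureTheory

noncomputable def indf (a s : ℝ) : ℝ := if s < a then 1 else 0

lemma indf_eq (a : ℝ) : indf a = (Set.Iio a).indicator (fun _ => (1:ℝ)) := by
  funext s; simp [indf, Set.indicator_apply]

lemma integrable_indf (a : ℝ) :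
    Integrable (indf a) (volume.restrict (Set.Ioi 0)) := by
  rw [indf_eq, integrable_indicator_iff measurableSet_Iio]
  refine integrableOn_const (ne_of_lt ?_)
  rw [Measure.restrict_apply measurableSet_Iio, Set.Iio_inter_Ioi]
  exact measure_Ioo_lt_top

lemma integral_indf {a : ℝ} (ha : 0 ≤ a) :
    ∫ s in Set.Ioi (0:ℝ), indf a s = a := by
  rw [indf_eq, MeasureTheory.integral_indicator measurableSet_Iio]
  rw [setIntegral_const, measureReal_def, Measure.restrict_apply measurableSet_Iio, Set.Iio_inter_Ioi,
    Real.volume_Ioo, smul_eq_mul, mul_one, sub_zero, ENNReal.toReal_ofReal ha]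

lemma integral_abs_indf_of_le {a b : ℝ} (ha : 0 ≤ a) (hab : a ≤ b) :
    ∫ s in Set.Ioi (0:ℝ), |indf a s - indf b s| = b - a := by
  have hpt : ∀ s, |indf a s - indf b s| = indf b s - indf a s := by
    intro s
    have hle : indf a s ≤ indf b s := by
      unfold indf; split_ifs with h1 h2 <;> try norm_num
      exact absurd (lt_of_lt_of_le h1 hab) ‹¬ s < b›
    rw [abs_of_nonpos (sub_nonpos.2 hle), neg_sub]
  simp only [hpt]
  rw [MeasureTheory.integral_sub (integrable_indf b) (integrable_indf a),
    integral_indf (le_trans ha hab), integral_indf ha]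

lemma integral_abs_indf {a b : ℝ} (ha : 0 ≤ a) (hb : 0 ≤ b) :
    ∫ s in Set.Ioi (0:ℝ), |indf a s - indf b s| = |a - b| := by
  rcases le_total a b with h | h
  · rw [integral_abs_indf_of_le ha h, abs_of_nonpos (sub_nonpos.2 h), neg_sub]
  · have hc : ∀ s, |indf a s - indf b s| = |indf b s - indf a s| := fun s => abs_sub_comm _ _
    simp only [hc]
    rw [integral_abs_indf_of_le hb h, abs_of_nonneg (sub_nonneg.2 h)]

noncomputable def edgeAbs (x : V → ℝ) : Sym2 V → ℝ :=
  Sym2.lift ⟨fun i j => |x i - x j|, fun i j => by simp [abs_sub_comm]⟩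

lemma cut_eq_sum [Fintype V] [DecidableEq V] (G : SimpleGraph V) [Fintype G.edgeSet] (C : Finset V) :
    (cutN G C : ℝ) = ∑ e ∈ G.edgeFinset, edgeAbs (fun i => if i ∈ C then (1:ℝ) else 0) e := by
  classical
  unfold cutN
  rw [Finset.card_filter]
  push_cast
  refine Finset.sum_congr rfl fun e _ => ?_
  induction e using Sym2.ind with
  | _ i j =>
    simp only [edgeAbs, Sym2.lift_mk, Sym2.mem_iff]
    by_cases hi : i ∈ C <;> by_cases hj : j ∈ C <;> simp [hi, hj]

theorem stmt_5 [Fintype V] [DecidableEq V] (G : SimpleGraph V) [DecidableRel G.Adj]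
    (U : Finset V) (hU : U.Nonempty) (g : V → ℝ)
    (hpos : ∀ i ∈ U, 0 < g i) (hzero : ∀ i ∉ U, g i = 0) (p : ℝ) (hp : 1 ≤ p) :
    hgC G g * ∑ i, g i ^ p ≤
      ∑ e ∈ G.edgeFinset,
        Sym2.lift ⟨fun i j => |g i ^ p - g j ^ p|, fun i j => by simp [abs_sub_comm]⟩ e := by
  classical
  have hp0 : (0:ℝ) < p := lt_of_lt_of_le one_pos hp
  have hgnn : ∀ i, 0 ≤ g i := fun i => by
    by_cases h : i ∈ U
    · exact (hpos i h).le
    · exact (hzero i h).ge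
  have hFnn : ∀ i, 0 ≤ g i ^ p := fun i => Real.rpow_nonneg (hgnn i) p
  have hintE : ∀ e ∈ G.edgeFinset,
      Integrable (fun s => edgeAbs (fun i => indf (g i ^ p) s) e)
        (volume.restrict (Set.Ioi 0)) := by
    intro e _
    induction e using Sym2.ind with
    | _ i j =>
      simp only [edgeAbs, Sym2.lift_mk]
      exact ((integrable_indf (g i ^ p)).sub (integrable_indf (g j ^ p))).abs
  have hintL : Integrable (fun s => hgC G g * ∑ i, indf (g i ^ p) s)
      (volume.restrict (Set.Ioi 0)) :=
    (integrable_finset_sum _ fun i _ => integrable_indf (g i ^ p)).const_mul _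
  have hintR : Integrable (fun s => ∑ e ∈ G.edgeFinset, edgeAbs (fun i => indf (g i ^ p) s) e)
      (volume.restrict (Set.Ioi 0)) := integrable_finset_sum _ hintE
  have key : ∀ s ∈ Set.Ioi (0:ℝ),
      hgC G g * ∑ i, indf (g i ^ p) s
        ≤ ∑ e ∈ G.edgeFinset, edgeAbs (fun i => indf (g i ^ p) s) e := by
    intro s hs
    have hs0 : (0:ℝ) < s := hs
    set C : Finset V := univ.filter fun i => s < g i ^ p with hC
    have hRHS : ∑ e ∈ G.edgeFinset, edgeAbs (fun i => indf (g i ^ p) s) e = (cutN G C : ℝ) := by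
      rw [cut_eq_sum G C]
      refine Finset.sum_congr rfl fun e _ => ?_
      congr 1
      funext i
      simp [indf, hC]
    have hLHS : ∑ i, indf (g i ^ p) s = (C.card : ℝ) := by
      simp [indf, hC, Finset.sum_boole]
    rw [hRHS, hLHS]
    rcases C.eq_empty_or_nonempty with hCe | hCne
    · simp [hCe]
    · obtain ⟨i1, hi1⟩ := hCne
      have hi1' : s < g i1 ^ p := by
        have := hi1; rw [hC, Finset.mem_filter] at this; exact this.2
      have ht0 : 0 ≤ s ^ p⁻¹ := Real.rpow_nonneg hs0.le _
      have hiff : ∀ i, s ^ p⁻¹ < g i ↔ s < g i ^ p := by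
        intro i
        constructor
        · intro h
          have hs' : s = (s ^ p⁻¹) ^ p := (Real.rpow_inv_rpow hs0.le hp0.ne').symm
          rw [hs']
          exact Real.rpow_lt_rpow ht0 h hp0
        · intro h
          have h2 : s ^ p⁻¹ < (g i ^ p) ^ p⁻¹ :=
            Real.rpow_lt_rpow hs0.le h (by positivity)
          rwa [Real.rpow_rpow_inv (hgnn i) hp0.ne'] at h2
      have hle : hgC G g ≤ (cutN G C : ℝ) / (C.card : ℝ) := by
        unfold hgC
        apply csInf_le
        · refine ⟨0, ?_⟩
          rintro r ⟨t, -, -, rfl⟩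
          positivity
        · refine ⟨s ^ p⁻¹, ht0, ?_, ?_⟩
          · exact lt_of_lt_of_le ((hiff i1).2 hi1')
              (le_csSup (Set.finite_range g).bddAbove ⟨i1, rfl⟩)
          · have hfil : ∀ (inst : DecidablePred fun i => s ^ p⁻¹ < g i),
                @Finset.filter V (fun i => s ^ p⁻¹ < g i) inst univ = C := by
              intro inst
              ext i
              rw [Finset.mem_filter, hC, Finset.mem_filter]
              simp [hiff i]
            rw [hfil]
      have hcard : (0:ℝ) < (C.card : ℝ) := by
        exact_mod_cast Finset.card_pos.2 ⟨i1, hi1⟩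
      calc hgC G g * (C.card : ℝ)
          ≤ ((cutN G C : ℝ) / C.card) * C.card :=
            mul_le_mul_of_nonneg_right hle hcard.le
        _ = (cutN G C : ℝ) := div_mul_cancel₀ _ hcard.ne'
  calc hgC G g * ∑ i, g i ^ p
      = ∫ s in Set.Ioi (0:ℝ), hgC G g * ∑ i, indf (g i ^ p) s := by
        rw [MeasureTheory.integral_const_mul,
          MeasureTheory.integral_finset_sum _ (fun i _ => integrable_indf (g i ^ p))]
        congr 1
        exact Finset.sum_congr rfl fun i _ => (integral_indf (hFnn i)).symm
    _ ≤ ∫ s in Set.Ioi (0:ℝ), ∑ e ∈ G.edgeFinset, edgeAbs (fun i => indf (g i ^ p) s) e :=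
        setIntegral_mono_on hintL hintR measurableSet_Ioi key
    _ = ∑ e ∈ G.edgeFinset, edgeAbs (fun i => g i ^ p) e := by
        rw [MeasureTheory.integral_finset_sum _ hintE]
        refine Finset.sum_congr rfl fun e _ => ?_
        induction e using Sym2.ind with
        | _ i j =>
          simp only [edgeAbs, Sym2.lift_mk]
          exact integral_abs_indf (hFnn i) (hFnn j)
    _ = _ := Finset.sum_congr rfl fun e _ => by
        induction e using Sym2.ind with
        | _ i j => simp [edgeAbs]
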